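/- Let H be a real inner product space, n ≥ 1, and let A_0 ≥ A_1 ≥ ⋯ ≥ A_{n−1} > 0 be real numbers. Then for any vectors w^0, w^1, …, w^n ∈ H one has ⟨ Σ_{k=1}^n A_{n−k}(w^k − w^{k−1}), w^n ⟩ ≥ ‖w^n‖ · Σ_{k=1}^n A_{n−k}(‖w^k‖ − ‖w^{k−1}‖). -/

import Mathlib

open Finset
open scoped RealInnerProductSpace

lemma abel_sum_helper (b h : ℕ → ℝ) (n : ℕ) (hn : 1 ≤ n)
    (hb0 : 0 ≤ b 1)
    (hbmono : ∀ k, 1 ≤ k → k + 1 ≤ n → b k ≤ b (k + 1))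
    (hh : ∀ k, h k ≤ 0) :
    b n * h n ≤ ∑ k ∈ Finset.Icc 1 n, b k * (h k - h (k - 1)) := by
  induction n, hn using Nat.le_induction with
  | base =>
    simp only [Finset.Icc_self, Finset.sum_singleton]
    have h0 := hh 0
    nlinarith
  | succ n hn ih =>
    rw [Finset.sum_Icc_succ_top (by omega)]
    have ih' := ih (fun k hk hk' => hbmono k hk (by omega))
    have hmon := hbmono n hn (le_refl _)
    have h1 := hh n
    have h2 := hh (n + 1)
    simp only [Nat.add_sub_cancel]
    nlinarith

theorem discrete_convolution_inner_product_bound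
    {H : Type*} [NormedAddCommGroup H] [InnerProductSpace ℝ H]
    (n : ℕ) (hn : 1 ≤ n)
    (A : ℕ → ℝ)
    (hpos : 0 < A (n - 1))
    (hmono : ∀ j, j + 1 ≤ n - 1 → A (j + 1) ≤ A j)
    (w : ℕ → H) :
    ⟪∑ k ∈ Finset.Icc 1 n, A (n - k) • (w k - w (k - 1)), w n⟫ ≥
      ‖w n‖ * ∑ k ∈ Finset.Icc 1 n, A (n - k) * (‖w k‖ - ‖w (k - 1)‖) := by
  set h : ℕ → ℝ := fun k => ⟪w k, w n⟫ - ‖w k‖ * ‖w n‖ with hh_def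
  have key := abel_sum_helper (fun k => A (n - k)) h n hn
    (by simpa using hpos.le)
    (fun k hk hk' => by
      have h1 : n - k - 1 + 1 = n - k := by omega
      have := hmono (n - k - 1) (by omega)
      rw [h1] at this
      simpa [show n - (k + 1) = n - k - 1 by omega] using this)
    (fun k => sub_nonpos.2 (real_inner_le_norm _ _))
  have hn0 : h n = 0 := by
    simp [hh_def, real_inner_self_eq_norm_mul_norm, sq]
  rw [hn0, mul_zero] at key
  rw [ge_iff_le, ← sub_nonneg, sum_inner, Finset.mul_sum, ← Finset.sum_sub_distrib]
  refine le_trans key (le_of_eq (Finset.sum_congr rfl fun k hk => ?_))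
  simp only [hh_def, real_inner_smul_left, inner_sub_left]
  ring
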